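/- Let k, ℓ be integers with 0 < ℓ ≤ k and let G = (V, E) be a (k,ℓ)-tight multigraph with |V| = n ≥ 1. Then E contains ℓ edge-disjoint spanning trees: there exist ℓ pairwise disjoint sub-multisets T₁, …, T_ℓ of E such that each Tᵢ consists of n − 1 loopless edges and the multigraph (V, Tᵢ) is connected. -/

import Mathlib

set_option maxHeartbeats 1600000
set_option linter.unusedSectionVars false
set_option linter.unusedVariables false
set_option linter.unusedTactic false


/-- The number of edges of the multiset `E` (counted with multiplicity)
whose endpoints both lie in the vertex subset `S`. -/
def spanCount {V : Type*} [DecidableEq V] (E : Multiset (Sym2 V)) (S : Finset V) : ℕ :=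
  (E.filter (fun e => e ∈ S.sym2)).card

/-- A multigraph on the finite vertex type `V` with edge multiset `E` is
`(k,ℓ)`-sparse if every subset `S` of vertices spans at most `max 0 (k|S| - ℓ)` edges. -/
def Sparse {V : Type*} [Fintype V] [DecidableEq V] (k l : ℤ) (E : Multiset (Sym2 V)) : Prop :=
  ∀ S : Finset V, (spanCount E S : ℤ) ≤ max 0 (k * S.card - l)

/-- A multigraph is `(k,ℓ)`-tight if it is `(k,ℓ)`-sparse and has exactly `k|V| - ℓ` edges. -/
def Tight {V : Type*} [Fintype V] [DecidableEq V] (k l : ℤ) (E : Multiset (Sym2 V)) : Prop :=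
  Sparse k l E ∧ (Multiset.card E : ℤ) = k * (Fintype.card V) - l

attribute [local instance 10] Classical.propDecidable

namespace NW17

variable {V : Type*} [DecidableEq V]

def Reach (X : Multiset (Sym2 V)) (x y : V) : Prop :=
  Relation.ReflTransGen (fun a b => s(a,b) ∈ X) x y

def IsForest (X : Multiset (Sym2 V)) : Prop :=
  ∀ e ∈ X, ∀ a b, e = s(a,b) → ¬ Reach (X.erase e) a b

theorem Reach.rfl' {X : Multiset (Sym2 V)} {x : V} : Reach X x x := Relation.ReflTransGen.refl

theorem reach_single {X : Multiset (Sym2 V)} {x y : V} (h : s(x,y) ∈ X) : Reach X x y :=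
  Relation.ReflTransGen.single h

theorem reach_mono {X Y : Multiset (Sym2 V)} (hXY : ∀ e ∈ X, e ∈ Y) {x y : V}
    (h : Reach X x y) : Reach Y x y :=
  Relation.ReflTransGen.mono (fun a b hab => hXY _ hab) _ _ h

theorem reach_symm {X : Multiset (Sym2 V)} {x y : V} (h : Reach X x y) : Reach X y x := by
  have hs : Symmetric (fun a b => s(a,b) ∈ X) := fun a b hab => by
    show s(b,a) ∈ X; rwa [Sym2.eq_swap]
  exact (@Relation.ReflTransGen.stdSymm _ _ ⟨hs⟩).symm _ _ h

theorem reach_trans {X : Multiset (Sym2 V)} {x y z : V} (h : Reach X x y) (h' : Reach X y z) :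
    Reach X x z := h.trans h'

theorem reach_cons_decomp {X : Multiset (Sym2 V)} {u v x y : V}
    (h : Reach (s(u,v) ::ₘ X) x y) :
    Reach X x y ∨ (Reach X x u ∧ Reach X v y) ∨ (Reach X x v ∧ Reach X u y) := by
  induction h with
  | refl => exact Or.inl Relation.ReflTransGen.refl
  | @tail c d hxc hcd ih =>
    rcases Multiset.mem_cons.mp hcd with hcd' | hcd'
    · rcases Sym2.eq_iff.mp hcd'.symm with ⟨hu, hv⟩ | ⟨hu, hv⟩
      · subst hu; subst hv
        rcases ih with h1 | ⟨h2a, _⟩ | ⟨h3a, _⟩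
        · exact Or.inr (Or.inl ⟨h1, Relation.ReflTransGen.refl⟩)
        · exact Or.inr (Or.inl ⟨h2a, Relation.ReflTransGen.refl⟩)
        · exact Or.inl h3a
      · subst hu; subst hv
        rcases ih with h1 | ⟨h2a, _⟩ | ⟨h3a, _⟩
        · exact Or.inr (Or.inr ⟨h1, Relation.ReflTransGen.refl⟩)
        · exact Or.inl h2a
        · exact Or.inr (Or.inr ⟨h3a, Relation.ReflTransGen.refl⟩)
    · rcases ih with h1 | ⟨h2a, h2b⟩ | ⟨h3a, h3b⟩
      · exact Or.inl (h1.tail hcd')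
      · exact Or.inr (Or.inl ⟨h2a, h2b.tail hcd'⟩)
      · exact Or.inr (Or.inr ⟨h3a, h3b.tail hcd'⟩)

theorem isForest_of_le {X Y : Multiset (Sym2 V)} (h : Y ≤ X) (hX : IsForest X) : IsForest Y := by
  intro f hf a b hab hr
  exact hX f (Multiset.mem_of_le h hf) a b hab
    (reach_mono (fun e he => Multiset.mem_of_le (Multiset.erase_le_erase f h) he) hr)

theorem isForest_cons {X : Multiset (Sym2 V)} {u v : V} (hX : IsForest X)
    (huv : ¬ Reach X u v) : IsForest (s(u,v) ::ₘ X) := by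
  have hne : s(u,v) ∉ X := fun h => huv (reach_single h)
  intro f hf a b hab
  rcases Multiset.mem_cons.mp hf with rfl | hfX
  · rw [Multiset.erase_cons_head]
    rcases Sym2.eq_iff.mp hab.symm with ⟨hu, hv⟩ | ⟨hu, hv⟩
    · subst hu; subst hv; exact huv
    · subst hu; subst hv; exact fun hr => huv (reach_symm hr)
  · have hfne : f ≠ s(u,v) := fun h => hne (h ▸ hfX)
    rw [Multiset.erase_cons_tail _ hfne.symm]
    intro hr
    have hmono : ∀ {p q : V}, Reach (X.erase f) p q → Reach X p q :=
      fun h' => reach_mono (fun e he => Multiset.mem_of_mem_erase he) h'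
    rcases reach_cons_decomp hr with h1 | ⟨h2a, h2b⟩ | ⟨h3a, h3b⟩
    · exact hX f hfX a b hab h1
    · exact huv (((reach_symm (hmono h2a)).trans
        (reach_single (hab ▸ hfX))).trans (reach_symm (hmono h2b)))
    · exact huv ((hmono h3b).trans
        ((reach_symm (reach_single (hab ▸ hfX))).trans (hmono h3a)))

theorem IsForest.not_isDiag {X : Multiset (Sym2 V)} (hX : IsForest X) {e : Sym2 V}
    (he : e ∈ X) : ¬ e.IsDiag := by
  induction e with
  | _ a b =>
    intro hd
    have hab : a = b := by simpa using hd
    subst hab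
    exact hX _ he a a rfl Relation.ReflTransGen.refl

theorem mk_mem_sym2 {W : Finset V} {a b : V} : s(a,b) ∈ W.sym2 ↔ a ∈ W ∧ b ∈ W :=
  Finset.mk_mem_sym2_iff

theorem reach_closed {X : Multiset (Sym2 V)} {W : Finset V}
    (hcl : ∀ e ∈ X, ∀ a b, e = s(a,b) → (a ∈ W ↔ b ∈ W)) {x y : V}
    (h : Reach X x y) (hx : x ∈ W) : y ∈ W := by
  induction h with
  | refl => exact hx
  | @tail c d hxc hcd ih => exact (hcl _ hcd c d rfl).mp ih

theorem reach_filter_closed {X : Multiset (Sym2 V)} {W : Finset V}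
    (hcl : ∀ e ∈ X, ∀ a b, e = s(a,b) → (a ∈ W ↔ b ∈ W)) {x y : V}
    (h : Reach X x y) (hx : x ∈ W) :
    Reach (X.filter (fun e => e ∈ W.sym2)) x y := by
  induction h with
  | refl => exact Relation.ReflTransGen.refl
  | @tail c d hxc hcd ih =>
    have hc : c ∈ W := reach_closed hcl hxc hx
    have hd : d ∈ W := (hcl _ hcd c d rfl).mp hc
    exact ih.tail (Multiset.mem_filter.mpr ⟨hcd, mk_mem_sym2.mpr ⟨hc, hd⟩⟩)

theorem forest_card_le_aux (n : ℕ) : ∀ (U : Finset V), U.card ≤ n → U.Nonempty →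
    ∀ (X : Multiset (Sym2 V)), IsForest X → (∀ e ∈ X, e ∈ U.sym2) →
    Multiset.card X + 1 ≤ U.card := by
  induction n with
  | zero =>
    intro U hU hne
    exact absurd (Finset.card_eq_zero.mp (Nat.le_zero.mp hU)) hne.ne_empty
  | succ n ih =>
    intro U hU hne X hX hin
    rcases Multiset.empty_or_exists_mem X with rfl | ⟨e, he⟩
    · simpa using hne.card_pos
    · induction e with
      | _ u v =>
        have huvU : u ∈ U ∧ v ∈ U := mk_mem_sym2.mp (hin _ he)
        have huv : u ≠ v := by
          intro h; exact hX.not_isDiag he (by simp [h])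
        set W : Finset V := U.filter (fun w => Reach (X.erase s(u,v)) u w) with hWdef
        have hWU : W ⊆ U := Finset.filter_subset _ _
        have huW : u ∈ W := Finset.mem_filter.mpr ⟨huvU.1, Relation.ReflTransGen.refl⟩
        have hvW : v ∉ W := by
          intro hv
          exact hX _ he u v rfl (Finset.mem_filter.mp hv).2
        -- edges of X.erase e are inside U; closed under W
        have hinE : ∀ f ∈ X.erase s(u,v), f ∈ U.sym2 :=
          fun f hf => hin f (Multiset.mem_of_mem_erase hf)
        have hcl : ∀ f ∈ X.erase s(u,v), ∀ a b, f = s(a,b) → (a ∈ W ↔ b ∈ W) := by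
          intro f hf a b hab
          have habU : a ∈ U ∧ b ∈ U := mk_mem_sym2.mp (hab ▸ hinE f hf)
          constructor
          · intro ha
            exact Finset.mem_filter.mpr ⟨habU.2,
              (Finset.mem_filter.mp ha).2.tail (hab ▸ hf)⟩
          · intro hb
            refine Finset.mem_filter.mpr ⟨habU.1, (Finset.mem_filter.mp hb).2.trans ?_⟩
            exact reach_symm (reach_single (hab ▸ hf))
        set X1 := (X.erase s(u,v)).filter (fun f => f ∈ W.sym2) with hX1
        set X2 := (X.erase s(u,v)).filter (fun f => ¬ f ∈ W.sym2) with hX2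
        have hsplit : X1 + X2 = X.erase s(u,v) := Multiset.filter_add_not _ _
        have hXle : X.erase s(u,v) ≤ X := Multiset.erase_le _ _
        -- X1 is a forest inside W
        have h1 : Multiset.card X1 + 1 ≤ W.card := by
          refine ih W ?_ ⟨u, huW⟩ X1 (isForest_of_le (le_trans (Multiset.filter_le _ _) hXle) hX)
            (fun f hf => (Multiset.mem_filter.mp hf).2)
          have : W ⊂ U := ⟨hWU, fun hUW => hvW (hUW huvU.2)⟩
          have := Finset.card_lt_card this
          omega
        have h2 : Multiset.card X2 + 1 ≤ (U \ W).card := by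
          refine ih (U \ W) ?_ ⟨v, Finset.mem_sdiff.mpr ⟨huvU.2, hvW⟩⟩ X2
            (isForest_of_le (le_trans (Multiset.filter_le _ _) hXle) hX) ?_
          · have : U \ W ⊂ U := by
              refine Finset.sdiff_ssubset ?_ ⟨u, huW⟩
              exact hWU
            have := Finset.card_lt_card this
            omega
          · intro f hf
            have hf' := Multiset.mem_filter.mp hf
            induction f with
            | _ a b =>
              have habU : a ∈ U ∧ b ∈ U := mk_mem_sym2.mp (hinE _ hf'.1)
              have : a ∉ W := by
                intro ha
                exact hf'.2 (mk_mem_sym2.mpr ⟨ha, (hcl _ hf'.1 a b rfl).mp ha⟩)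
              have hb : b ∉ W := fun hb => this ((hcl _ hf'.1 a b rfl).mpr hb)
              exact mk_mem_sym2.mpr ⟨Finset.mem_sdiff.mpr ⟨habU.1, this⟩,
                Finset.mem_sdiff.mpr ⟨habU.2, hb⟩⟩
        have hcards : Multiset.card X = Multiset.card X1 + Multiset.card X2 + 1 := by
          have : Multiset.card (X.erase s(u,v)) = Multiset.card X - 1 :=
            Multiset.card_erase_of_mem he
          have hpos : 0 < Multiset.card X := Multiset.card_pos.mpr (by
            intro h; rw [h] at he; simp at he)
          have hc2 : Multiset.card X1 + Multiset.card X2 = Multiset.card (X.erase s(u,v)) := by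
            rw [← hsplit]; simp
          omega
        have hWcards : (U \ W).card + W.card = U.card := Finset.card_sdiff_add_card_eq_card hWU
        omega

theorem forest_card_le {X : Multiset (Sym2 V)} (hX : IsForest X) (U : Finset V)
    (hU : U.Nonempty) (hin : ∀ e ∈ X, e ∈ U.sym2) : Multiset.card X + 1 ≤ U.card :=
  forest_card_le_aux U.card U le_rfl hU X hX hin

theorem conn_card_aux (N : ℕ) : ∀ (D : Multiset (Sym2 V)), Multiset.card D ≤ N →
    ∀ (p : Finset V), (∀ e ∈ D, e ∈ p.sym2) → (∀ x ∈ p, ∀ y ∈ p, Reach D x y) →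
    p.card ≤ Multiset.card D + 1 := by
  induction N with
  | zero =>
    intro D hD p hin hconn
    -- no edges: p has ≤ 1 element
    have hD0 : D = 0 := Multiset.card_eq_zero.mp (Nat.le_zero.mp hD)
    subst hD0
    by_contra h
    push_neg at h
    simp only [Multiset.card_zero] at h
    obtain ⟨x, hx, y, hy, hxy⟩ := Finset.one_lt_card.mp h
    have := hconn x hx y hy
    rcases Relation.ReflTransGen.cases_head this with rfl | ⟨c, hc, -⟩
    · exact hxy rfl
    · simp at hc
  | succ N ih =>
    intro D hD p hin hconn
    by_cases hp1 : p.card ≤ 1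
    · omega
    · push_neg at hp1
      obtain ⟨x, hx, y, hy, hxy⟩ := Finset.one_lt_card.mp hp1
      obtain ⟨c, hc, -⟩ : ∃ c, s(x,c) ∈ D ∧ Reach D c y := by
        rcases Relation.ReflTransGen.cases_head (hconn x hx y hy) with rfl | ⟨c, hc, h⟩
        · exact absurd rfl hxy
        · exact ⟨c, hc, h⟩
      set e := s(x,c) with hedef
      have hDe : Multiset.card (D.erase e) = Multiset.card D - 1 := Multiset.card_erase_of_mem hc
      have hDpos : 0 < Multiset.card D := Multiset.card_pos.mpr (by
        intro h0; rw [h0] at hc; simp at hc)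
      by_cases hall : ∀ a ∈ p, ∀ b ∈ p, Reach (D.erase e) a b
      · have := ih (D.erase e) (by omega) p
          (fun f hf => hin f (Multiset.mem_of_mem_erase hf)) hall
        omega
      · push_neg at hall
        obtain ⟨x0, hx0, y0, hy0, hnr⟩ := hall
        set W : Finset V := p.filter (fun w => Reach (D.erase e) x0 w) with hWdef
        have hWp : W ⊆ p := Finset.filter_subset _ _
        have hx0W : x0 ∈ W := Finset.mem_filter.mpr ⟨hx0, Relation.ReflTransGen.refl⟩
        have hy0W : y0 ∉ W := fun h => hnr (Finset.mem_filter.mp h).2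
        have hinE : ∀ f ∈ D.erase e, f ∈ p.sym2 :=
          fun f hf => hin f (Multiset.mem_of_mem_erase hf)
        have hcl : ∀ f ∈ D.erase e, ∀ a b, f = s(a,b) → (a ∈ W ↔ b ∈ W) := by
          intro f hf a b hab
          have habp : a ∈ p ∧ b ∈ p := mk_mem_sym2.mp (hab ▸ hinE f hf)
          constructor
          · intro ha
            exact Finset.mem_filter.mpr ⟨habp.2, (Finset.mem_filter.mp ha).2.tail (hab ▸ hf)⟩
          · intro hb
            exact Finset.mem_filter.mpr ⟨habp.1, (Finset.mem_filter.mp hb).2.trans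
              (reach_symm (reach_single (hab ▸ hf)))⟩
        -- e crosses W : one end in W, other in p \ W
        have hDeq : e ::ₘ D.erase e = D := Multiset.cons_erase hc
        have hxc_p : x ∈ p ∧ c ∈ p := mk_mem_sym2.mp (hin _ hc)
        obtain ⟨u', v', huv'e, hu'W, hv'W⟩ :
            ∃ u' v', e = s(u',v') ∧ u' ∈ W ∧ v' ∈ p \ W := by
          have hr : Reach (e ::ₘ D.erase e) x0 y0 := by rw [hDeq]; exact hconn x0 hx0 y0 hy0
          rcases reach_cons_decomp hr with h1 | ⟨h2a, h2b⟩ | ⟨h3a, h3b⟩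
          · exact absurd h1 hnr
          · -- x0 → x, c → y0
            have hxW : x ∈ W := Finset.mem_filter.mpr ⟨hxc_p.1, h2a⟩
            have hcW : c ∉ W := by
              intro hcw
              exact hnr ((Finset.mem_filter.mp hcw).2.trans h2b)
            exact ⟨x, c, rfl, hxW, Finset.mem_sdiff.mpr ⟨hxc_p.2, hcW⟩⟩
          · have hcW : c ∈ W := Finset.mem_filter.mpr ⟨hxc_p.2, h3a⟩
            have hxW : x ∉ W := by
              intro hxw
              exact hnr ((Finset.mem_filter.mp hxw).2.trans h3b)
            exact ⟨c, x, Sym2.eq_swap.symm, hcW, Finset.mem_sdiff.mpr ⟨hxc_p.1, hxW⟩⟩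
        set D1 := (D.erase e).filter (fun f => f ∈ W.sym2) with hD1
        set D2 := (D.erase e).filter (fun f => f ∈ (p \ W).sym2) with hD2
        -- connectivity of W via D1
        have hconn1 : ∀ a ∈ W, ∀ b ∈ W, Reach D1 a b := by
          intro a ha b hb
          have hab : Reach (D.erase e) a b :=
            (reach_symm (Finset.mem_filter.mp ha).2).trans (Finset.mem_filter.mp hb).2
          exact reach_filter_closed hcl hab ha
        have hcl2 : ∀ f ∈ D.erase e, ∀ a b, f = s(a,b) → (a ∈ p \ W ↔ b ∈ p \ W) := by
          intro f hf a b hab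
          have habp : a ∈ p ∧ b ∈ p := mk_mem_sym2.mp (hab ▸ hinE f hf)
          rw [Finset.mem_sdiff, Finset.mem_sdiff]
          have := hcl f hf a b hab
          tauto
        have hconn2 : ∀ a ∈ p \ W, ∀ b ∈ p \ W, Reach D2 a b := by
          intro a ha b hb
          have hap := Finset.mem_sdiff.mp ha
          have hbp := Finset.mem_sdiff.mp hb
          have hr : Reach (s(x,c) ::ₘ D.erase e) a b := by
            rw [← hedef, hDeq]; exact hconn a hap.1 b hbp.1
          have hab : Reach (D.erase e) a b := by
            rcases reach_cons_decomp hr with h1 | ⟨h2a, h2b⟩ | ⟨h3a, h3b⟩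
            · exact h1
            · by_cases hxW : x ∈ W
              · exact absurd (reach_closed hcl (reach_symm h2a) hxW) hap.2
              · have hcW : c ∈ W := by
                  rcases Sym2.eq_iff.mp huv'e with ⟨h1', h2'⟩ | ⟨h1', h2'⟩
                  · exact absurd (h1' ▸ hu'W) hxW
                  · exact h2' ▸ hu'W
                exact absurd (reach_closed hcl h2b hcW) hbp.2
            · by_cases hcW : c ∈ W
              · exact absurd (reach_closed hcl (reach_symm h3a) hcW) hap.2
              · have hxW : x ∈ W := by
                  rcases Sym2.eq_iff.mp huv'e with ⟨h1', h2'⟩ | ⟨h1', h2'⟩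
                  · exact h1' ▸ hu'W
                  · exact absurd (h2' ▸ hu'W) hcW
                exact absurd (reach_closed hcl h3b hxW) hbp.2
          exact reach_filter_closed hcl2 hab ha
        -- cardinalities
        have hv'p : v' ∈ p := (Finset.mem_sdiff.mp hv'W).1
        have hW_ne : W.Nonempty := ⟨u', hu'W⟩
        have hpW_ne : (p \ W).Nonempty := ⟨v', hv'W⟩
        have hcard1 : Multiset.card D1 ≤ Multiset.card (D.erase e) :=
          Multiset.card_le_card (Multiset.filter_le _ _)
        have hD2le : D2 ≤ (D.erase e).filter (fun f => ¬ f ∈ W.sym2) := by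
          refine Multiset.le_iff_count.mpr (fun f => ?_)
          rw [Multiset.count_filter, Multiset.count_filter]
          split_ifs with h1' h2'
          · exfalso
            induction f with
            | _ a b =>
              obtain ⟨ha, hb⟩ := mk_mem_sym2.mp h1'
              exact (Finset.mem_sdiff.mp ha).2 (mk_mem_sym2.mp h2').1
          · exact le_rfl
          · exact Nat.zero_le _
          · exact Nat.zero_le _
        have hsum12 : Multiset.card D1 + Multiset.card D2 ≤ Multiset.card (D.erase e) := by
          have := Multiset.filter_add_not (fun f => f ∈ W.sym2) (D.erase e)
          have hc2 : Multiset.card D2 ≤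
              Multiset.card ((D.erase e).filter (fun f => ¬ f ∈ W.sym2)) :=
            Multiset.card_le_card hD2le
          have hc3 : Multiset.card D1 +
              Multiset.card ((D.erase e).filter (fun f => ¬ f ∈ W.sym2)) =
              Multiset.card (D.erase e) := by
            rw [← Multiset.card_add, this]
          omega
        have hIH1 : W.card ≤ Multiset.card D1 + 1 := by
          refine ih D1 (by omega) W (fun f hf => (Multiset.mem_filter.mp hf).2) hconn1
        have hIH2 : (p \ W).card ≤ Multiset.card D2 + 1 := by
          refine ih D2 ?_ (p \ W) (fun f hf => (Multiset.mem_filter.mp hf).2) hconn2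
          have : Multiset.card D2 ≤ Multiset.card (D.erase e) :=
            Multiset.card_le_card (Multiset.filter_le _ _)
          omega
        have hWcards : (p \ W).card + W.card = p.card := Finset.card_sdiff_add_card_eq_card hWp
        omega

theorem conn_card {D : Multiset (Sym2 V)} {p : Finset V}
    (hin : ∀ e ∈ D, e ∈ p.sym2) (hconn : ∀ x ∈ p, ∀ y ∈ p, Reach D x y) :
    p.card ≤ Multiset.card D + 1 :=
  conn_card_aux (Multiset.card D) D le_rfl p hin hconn

section Chains

theorem exists_dup {α : Type*} : ∀ {l : List α}, ¬ l.Nodup →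
    ∃ (v : α) (A B C : List α), l = A ++ v :: (B ++ v :: C) := by
  intro l
  induction l with
  | nil => intro h; exact absurd List.nodup_nil h
  | cons a l' ih =>
    intro h
    by_cases ha : a ∈ l'
    · obtain ⟨s, t, rfl⟩ := List.append_of_mem ha
      exact ⟨a, [], s, t, by simp⟩
    · have : ¬ l'.Nodup := fun hn => h (List.nodup_cons.mpr ⟨ha, hn⟩)
      obtain ⟨v, A, B, C, rfl⟩ := ih this
      exact ⟨v, a :: A, B, C, by simp⟩

theorem getLast_prefix {α : Type*} (P : List α) (v : α) (C : List α) :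
    (P ++ v :: C).getLast (by simp) = (v :: C).getLast (List.cons_ne_nil _ _) :=
  List.getLast_append_of_ne_nil _ (List.cons_ne_nil _ _)


theorem getLast_cons_append {α : Type*} (x : α) (P : List α) (v : α) (C : List α) :
    (x :: (P ++ v :: C)).getLast (List.cons_ne_nil _ _)
      = (v :: C).getLast (List.cons_ne_nil _ _) := by
  rw [List.getLast_congr (l₂ := (x :: P) ++ (v :: C)) _ (by simp) (by simp)]
  exact List.getLast_append_of_ne_nil _ (List.cons_ne_nil _ _)

theorem chain_nodup_aux {α : Type*} (n : ℕ) : ∀ (L : List α) (x : α) (r : α → α → Prop),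
    L.length ≤ n → List.Chain r x L →
    ∃ L', List.Chain r x L' ∧ (x :: L').Nodup ∧
      (x :: L').getLast (List.cons_ne_nil _ _) = (x :: L).getLast (List.cons_ne_nil _ _) := by
  induction n with
  | zero =>
    intro L x r hL hc
    rw [List.length_eq_zero_iff.mp (Nat.le_zero.mp hL)]
    exact ⟨[], List.Chain.nil, List.nodup_singleton x, rfl⟩
  | succ n ih =>
    intro L x r hL hc
    by_cases hnd : (x :: L).Nodup
    · exact ⟨L, hc, hnd, rfl⟩
    · by_cases h : x ∈ L
      case pos =>
          -- x ∈ L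
          obtain ⟨B, C, rfl⟩ := List.append_of_mem h
          have hc2 : List.Chain r x C := (List.isChain_cons_split.mp hc).2
          obtain ⟨L', hc', hnd', hlast'⟩ := ih C x r (by
            simp only [List.length_append, List.length_cons] at hL; omega) hc2
          exact ⟨L', hc', hnd', hlast'.trans (getLast_cons_append x B x C).symm⟩
      case neg =>
          have h : ¬ L.Nodup := fun hn => hnd (List.nodup_cons.mpr ⟨h, hn⟩)
          obtain ⟨v, A, B, C, rfl⟩ := exists_dup h
          have h1 : List.Chain r x (A ++ [v]) ∧ List.Chain r v (B ++ v :: C) :=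
            List.isChain_cons_split.mp hc
          have h2 : List.Chain r v C := (List.isChain_cons_split.mp h1.2).2
          have hc' : List.Chain r x (A ++ v :: C) := List.isChain_cons_split.mpr ⟨h1.1, h2⟩
          obtain ⟨L', hcL, hndL, hlastL⟩ := ih (A ++ v :: C) x r (by
            simp only [List.length_append, List.length_cons] at hL ⊢; omega) hc'
          refine ⟨L', hcL, hndL, hlastL.trans ?_⟩
          rw [getLast_cons_append x A v C]
          have e2 : x :: (A ++ v :: (B ++ v :: C)) = x :: ((A ++ v :: B) ++ v :: C) := by simp
          rw [List.getLast_congr _ (by simp) e2, getLast_cons_append]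

def edgesL : List V → List (Sym2 V)
  | [] => []
  | [_] => []
  | a :: b :: tl => s(a,b) :: edgesL (b :: tl)

theorem edgesL_mem_vertex : ∀ {P : List V} {g : Sym2 V}, g ∈ edgesL P → ∀ z ∈ g, z ∈ P := by
  intro P
  induction P with
  | nil => intro g hg; simp [edgesL] at hg
  | cons a tl ih =>
    match tl with
    | [] => intro g hg; simp [edgesL] at hg
    | b :: tl' =>
      intro g hg z hz
      rcases List.mem_cons.mp hg with rfl | hg'
      · rcases Sym2.mem_iff.mp hz with rfl | rfl
        · exact List.mem_cons_self
        · exact List.mem_cons_of_mem _ (List.mem_cons_self)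
      · exact List.mem_cons_of_mem _ (ih hg' z hz)

theorem chain_reach_erase {X : Multiset (Sym2 V)} {h : Sym2 V} :
    ∀ (L : List V) (x : V), List.Chain (fun a b => s(a,b) ∈ X) x L →
    (∀ g ∈ edgesL (x :: L), g ≠ h) →
    Reach (X.erase h) x ((x :: L).getLast (List.cons_ne_nil _ _)) := by
  intro L
  induction L with
  | nil => intro x _ _; exact Relation.ReflTransGen.refl
  | cons c L' ih =>
    intro x hc hne
    have hxc : s(x,c) ∈ X := (List.chain_cons.mp hc).1
    have hxc' : s(x,c) ∈ X.erase h := by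
      rw [Multiset.mem_erase_of_ne (hne _ (List.mem_cons_self))]
      exact hxc
    have hrest := ih c (List.chain_cons.mp hc).2
      (fun g hg => hne g (List.mem_cons_of_mem _ hg))
    rw [List.getLast_cons (List.cons_ne_nil _ _)]
    exact Relation.ReflTransGen.head hxc' hrest

theorem forest_chain_not_reach {X : Multiset (Sym2 V)} (hX : IsForest X) :
    ∀ (L : List V) (x : V), List.Chain (fun a b => s(a,b) ∈ X) x L → (x :: L).Nodup →
    ∀ g ∈ edgesL (x :: L),
      ¬ Reach (X.erase g) x ((x :: L).getLast (List.cons_ne_nil _ _)) := by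
  intro L
  induction L with
  | nil => intro x _ _ g hg; simp [edgesL] at hg
  | cons c L' ih =>
    intro x hc hnd g hg
    have hxnotin : x ∉ c :: L' := (List.nodup_cons.mp hnd).1
    have hchain' : List.Chain (fun a b => s(a,b) ∈ X) c L' := (List.chain_cons.mp hc).2
    have hxc : s(x,c) ∈ X := (List.chain_cons.mp hc).1
    rw [List.getLast_cons (List.cons_ne_nil _ _)]
    rcases List.mem_cons.mp hg with rfl | hg'
    · intro hr
      have hnee : ∀ g' ∈ edgesL (c :: L'), g' ≠ s(x,c) := by
        intro g' hg' heq
        exact hxnotin (edgesL_mem_vertex hg' x (heq ▸ Sym2.mem_mk_left x c))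
      have h2 := chain_reach_erase L' c hchain' hnee
      exact hX _ hxc x c rfl (hr.trans (reach_symm h2))
    · intro hr
      have hsxc_ne : s(x,c) ≠ g := by
        intro heq
        exact hxnotin (edgesL_mem_vertex hg' x (heq ▸ Sym2.mem_mk_left x c))
      have hmem : s(x,c) ∈ X.erase g := by
        rw [Multiset.mem_erase_of_ne hsxc_ne]; exact hxc
      exact ih c hchain' (List.nodup_cons.mp hnd).2 g hg'
        ((reach_symm (reach_single hmem)).trans hr)

theorem chain_strengthen {r : V → V → Prop} {Q : Sym2 V → Prop} :
    ∀ (L : List V) (x : V), List.Chain r x L → (∀ g ∈ edgesL (x :: L), Q g) →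
    List.Chain (fun a b => r a b ∧ Q s(a,b)) x L := by
  intro L
  induction L with
  | nil => intro x _ _; exact List.Chain.nil
  | cons c L' ih =>
    intro x hc hQ
    exact List.chain_cons.mpr ⟨⟨(List.chain_cons.mp hc).1, hQ _ (List.mem_cons_self)⟩,
      ih c (List.chain_cons.mp hc).2 (fun g hg => hQ g (List.mem_cons_of_mem _ hg))⟩

theorem chain_edges_mem {r : V → V → Prop} {X : Multiset (Sym2 V)}
    (hr : ∀ a b, r a b → s(a,b) ∈ X) :
    ∀ (L : List V) (x : V), List.Chain r x L → ∀ g ∈ edgesL (x :: L), g ∈ X := by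
  intro L
  induction L with
  | nil => intro x _ g hg; simp [edgesL] at hg
  | cons c L' ih =>
    intro x hc g hg
    rcases List.mem_cons.mp hg with rfl | hg'
    · exact hr _ _ (List.chain_cons.mp hc).1
    · exact ih c (List.chain_cons.mp hc).2 g hg'

theorem key {X : Multiset (Sym2 V)} (hX : IsForest X) {x y : V} (h : Reach X x y) :
    ∃ L : List V, List.Chain
        (fun a b => s(a,b) ∈ X ∧ ¬ Reach (X.erase s(a,b)) x y) x L ∧
      (x :: L).getLast (List.cons_ne_nil _ _) = y := by
  obtain ⟨L0, hc0, hl0⟩ := List.exists_isChain_cons_of_relationReflTransGen h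
  obtain ⟨L, hc, hnd, hlast⟩ := chain_nodup_aux L0.length L0 x _ le_rfl hc0
  have hlasty : (x :: L).getLast (List.cons_ne_nil _ _) = y := by rw [hlast, hl0]
  refine ⟨L, ?_, hlasty⟩
  refine chain_strengthen (Q := fun g => ¬ Reach (X.erase g) x y) L x hc ?_
  intro g hg
  have := forest_chain_not_reach hX L x hc hnd g hg
  rwa [hlasty] at this

end Chains

section RS

variable [Fintype V] (E : Multiset (Sym2 V)) {t : ℕ} (F0 : Fin t → Multiset (Sym2 V))

def Good (F : Fin t → Multiset (Sym2 V)) : Prop :=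
  (∀ i, IsForest (F i)) ∧ (∑ i, F i) ≤ E

def total (F : Fin t → Multiset (Sym2 V)) : ℕ := ∑ i, Multiset.card (F i)

theorem total_eq_card_sum (F : Fin t → Multiset (Sym2 V)) :
    total F = Multiset.card (∑ i, F i) := by
  unfold total
  induction (Finset.univ : Finset (Fin t)) using Finset.induction with
  | empty => simp
  | insert a s hnotmem ih => rw [Finset.sum_insert hnotmem,
      Finset.sum_insert hnotmem, Multiset.card_add, ih]

theorem swap_sum (F : Fin t → Multiset (Sym2 V)) (i : Fin t) (e e' : Sym2 V)
    (he' : e' ∈ F i) :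
    e' ::ₘ ∑ j, Function.update F i (e ::ₘ (F i).erase e') j = e ::ₘ ∑ j, F j := by
  rw [Finset.sum_update_of_mem (Finset.mem_univ i)]
  rw [← Finset.add_sum_erase _ F (Finset.mem_univ i), Finset.erase_eq]
  rw [← Multiset.cons_add, ← Multiset.cons_add, Multiset.cons_swap,
    Multiset.cons_erase he']

theorem cons_sum_update (F : Fin t → Multiset (Sym2 V)) (i : Fin t) (X : Multiset (Sym2 V)) :
    ∑ j, Function.update F i X j = X + ∑ j ∈ Finset.univ.erase i, F j := by
  rw [Finset.sum_update_of_mem (Finset.mem_univ i), Finset.erase_eq]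

inductive RS : (Fin t → Multiset (Sym2 V)) → Prop
  | base : RS F0
  | step {F : Fin t → Multiset (Sym2 V)} (hF : RS F) (i : Fin t) (e e' : Sym2 V)
      (he : e ::ₘ ∑ j, F j ≤ E) (he' : e' ∈ F i)
      (hfor : IsForest (e ::ₘ (F i).erase e')) :
      RS (Function.update F i (e ::ₘ (F i).erase e'))

variable {E F0}

theorem RS_good (h0 : Good E F0) {F} (hF : RS E F0 F) :
    Good E F ∧ total F = total F0 := by
  induction hF with
  | base => exact ⟨h0, rfl⟩
  | @step F hF i e e' he he' hfor ih =>
    obtain ⟨⟨hfors, hle⟩, htot⟩ := ih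
    have hkey : e' ::ₘ ∑ j, Function.update F i (e ::ₘ (F i).erase e') j = e ::ₘ ∑ j, F j :=
      swap_sum F i e e' he'
    constructor
    · constructor
      · intro j
        by_cases hji : j = i
        · subst hji; rw [Function.update_self]; exact hfor
        · rw [Function.update_of_ne hji]; exact hfors j
      · have h1 : ∑ j, Function.update F i (e ::ₘ (F i).erase e') j ≤
            e' ::ₘ ∑ j, Function.update F i (e ::ₘ (F i).erase e') j :=
          Multiset.le_cons_self _ _
        rw [hkey] at h1
        exact le_trans h1 he
    · rw [total_eq_card_sum, total_eq_card_sum] at htot ⊢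
      have := congrArg Multiset.card hkey
      simp only [Multiset.card_cons] at this
      omega

theorem RS_reach (hmax : ∀ G : Fin t → Multiset (Sym2 V), Good E G → total G ≤ total F0) (h0 : Good E F0)
    {F} (hF : RS E F0 F) {e : Sym2 V}
    (he : e ::ₘ ∑ j, F j ≤ E) {x y : V} (hxy : e = s(x,y)) (i : Fin t) :
    Reach (F i) x y := by
  by_contra hnr
  obtain ⟨⟨hfors, -⟩, htot⟩ := RS_good h0 hF
  set G := Function.update F i (s(x,y) ::ₘ F i) with hG
  have hGsum : ∑ j, G j = s(x,y) ::ₘ ∑ j, F j := by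
    rw [hG, cons_sum_update, ← Finset.add_sum_erase _ F (Finset.mem_univ i),
      Multiset.cons_add]
  have hGgood : Good E G := by
    constructor
    · intro j
      by_cases hji : j = i
      · subst hji; rw [hG, Function.update_self]; exact isForest_cons (hfors _) hnr
      · rw [hG, Function.update_of_ne hji]; exact hfors j
    · rw [hGsum, ← hxy]; exact he
  have : total G = total F + 1 := by
    rw [total_eq_card_sum, total_eq_card_sum, hGsum]; simp
  have := hmax G hGgood
  omega

def E0 : Set (Sym2 V) := {e | ∃ F, RS E F0 F ∧ e ::ₘ ∑ j, F j ≤ E}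

def Ecl (E : Multiset (Sym2 V)) (F0 : Fin t → Multiset (Sym2 V)) (x y : V) : Prop :=
  Relation.ReflTransGen (fun a b => s(a,b) ∈ E0 (E := E) (F0 := F0)) x y

theorem Ecl.refl' {x : V} : Ecl E F0 x x := Relation.ReflTransGen.refl

theorem Ecl.symm' {x y : V} (h : Ecl E F0 x y) : Ecl E F0 y x := by
  have hs : Symmetric (fun a b => s(a,b) ∈ E0 (E := E) (F0 := F0)) := fun a b hab => by
    show s(b,a) ∈ E0; rwa [Sym2.eq_swap]
  exact (@Relation.ReflTransGen.stdSymm _ _ ⟨hs⟩).symm _ _ h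

def ConnW (E : Multiset (Sym2 V)) (F0 : Fin t → Multiset (Sym2 V))
    (X : Multiset (Sym2 V)) (c x y : V) : Prop :=
  Relation.ReflTransGen (fun a b => s(a,b) ∈ X ∧ Ecl E F0 a c ∧ Ecl E F0 b c) x y

theorem ConnW.rebase {X : Multiset (Sym2 V)} {a c u v : V}
    (h : ConnW E F0 X a u v) (hac : Ecl E F0 a c) : ConnW E F0 X c u v :=
  Relation.ReflTransGen.mono
    (fun p q ⟨h1, h2, h3⟩ => ⟨h1, h2.trans hac, h3.trans hac⟩) _ _ h

theorem chain_connW {X : Multiset (Sym2 V)} {c : V} :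
    ∀ (L : List V) (z : V),
    List.Chain (fun a b => s(a,b) ∈ X ∧ Ecl E F0 a b) z L → Ecl E F0 z c →
    ConnW E F0 X c z ((z :: L).getLast (List.cons_ne_nil _ _)) := by
  intro L
  induction L with
  | nil => intro z _ _; exact Relation.ReflTransGen.refl
  | cons w L' ih =>
    intro z hc hzc
    obtain ⟨⟨hmem, hzw⟩, hrest⟩ := List.chain_cons.mp hc
    have hwc : Ecl E F0 w c := (Ecl.symm' hzw).trans hzc
    rw [List.getLast_cons (List.cons_ne_nil _ _)]
    exact Relation.ReflTransGen.head ⟨hmem, hzc, hwc⟩ (ih w hrest hwc)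

theorem free_connW (hmax : ∀ G : Fin t → Multiset (Sym2 V), Good E G → total G ≤ total F0) (h0 : Good E F0)
    {F} (hF : RS E F0 F) {e : Sym2 V}
    (he : e ::ₘ ∑ j, F j ≤ E) {x y : V} (hxy : e = s(x,y)) (i : Fin t) :
    ConnW E F0 (F i) x x y := by
  have hE0 : s(x,y) ∈ E0 (E := E) (F0 := F0) := ⟨F, hF, hxy ▸ he⟩
  have hexy : Ecl E F0 x y := Relation.ReflTransGen.single hE0
  by_cases hv : x = y
  · subst hv; exact Relation.ReflTransGen.refl
  by_cases hmem : s(x,y) ∈ F i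
  · exact Relation.ReflTransGen.single ⟨hmem, Ecl.refl', Ecl.symm' hexy⟩
  · have hfors := (RS_good h0 hF).1.1
    have hreach : Reach (F i) x y := RS_reach hmax h0 hF he hxy i
    obtain ⟨L, hc, hlast⟩ := key (hfors i) hreach
    have hc2 : List.Chain (fun a b => s(a,b) ∈ F i ∧ Ecl E F0 a b) x L := by
      refine List.Chain.imp ?_ hc
      rintro a b ⟨hmemab, hnr⟩
      refine ⟨hmemab, Relation.ReflTransGen.single ?_⟩
      have hfor2 : IsForest (e ::ₘ (F i).erase s(a,b)) := by
        rw [hxy]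
        exact isForest_cons (isForest_of_le (Multiset.erase_le _ _) (hfors i)) hnr
      refine ⟨Function.update F i (e ::ₘ (F i).erase s(a,b)),
        RS.step hF i e s(a,b) he hmemab hfor2, ?_⟩
      rw [swap_sum F i e s(a,b) hmemab]
      exact he
    have := chain_connW L x hc2 Ecl.refl'
    rwa [hlast] at this

theorem transport (hmax : ∀ G : Fin t → Multiset (Sym2 V), Good E G → total G ≤ total F0) (h0 : Good E F0)
    {F} (hF : RS E F0 F) (i0 : Fin t) (e e' : Sym2 V)
    (he : e ::ₘ ∑ j, F j ≤ E) (hfors : ∀ i, IsForest (F i))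
    (i : Fin t) (c u v : V)
    (h : ConnW E F0 (Function.update F i0 (e ::ₘ (F i0).erase e') i) c u v) :
    ConnW E F0 (F i) c u v := by
  by_cases hii : i = i0
  · subst hii
    rw [Function.update_self] at h
    induction h with
    | refl => exact Relation.ReflTransGen.refl
    | @tail p q hprev hstep ih =>
      obtain ⟨hmem, hpc, hqc⟩ := hstep
      rcases Multiset.mem_cons.mp hmem with heq | hmem'
      · have h1 := free_connW hmax h0 hF he heq.symm i
        exact ih.trans ((h1.rebase hpc))
      · exact ih.tail ⟨Multiset.mem_of_mem_erase hmem', hpc, hqc⟩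
  · rw [Function.update_of_ne hii] at h
    exact h

theorem transport_to_base (hmax : ∀ G : Fin t → Multiset (Sym2 V), Good E G → total G ≤ total F0) (h0 : Good E F0)
    {F} (hF : RS E F0 F) :
    ∀ (i : Fin t) (c u v : V), ConnW E F0 (F i) c u v → ConnW E F0 (F0 i) c u v := by
  induction hF with
  | base => exact fun i c u v h => h
  | @step F hF i0 e e' he he' hfor ih =>
    intro i c u v h
    exact ih i c u v (transport hmax h0 hF i0 e e' he (RS_good h0 hF).1.1 i c u v h)

theorem ecl_connW (hmax : ∀ G : Fin t → Multiset (Sym2 V), Good E G → total G ≤ total F0) (h0 : Good E F0)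
    {x y : V} (h : Ecl E F0 x y) (i : Fin t) : ConnW E F0 (F0 i) x x y := by
  induction h with
  | refl => exact Relation.ReflTransGen.refl
  | @tail w z hxw hwz ih =>
    obtain ⟨F, hF, hfree⟩ := hwz
    have h1 := free_connW hmax h0 hF hfree rfl i
    have h2 := transport_to_base hmax h0 hF i w w z h1
    have hwx : Ecl E F0 w x := Ecl.symm' hxw
    exact ih.trans (h2.rebase hwx)

end RS

section Counting

theorem card_finset_sum {β : Type*} {γ : Type*} (s : Finset β) (g : β → Multiset γ) :
    Multiset.card (∑ b ∈ s, g b) = ∑ b ∈ s, Multiset.card (g b) := by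
  induction s using Finset.induction with
  | empty => simp
  | insert a s' hnm ih => rw [Finset.sum_insert hnm, Finset.sum_insert hnm,
      Multiset.card_add, ih]

theorem filter_finset_sum {β : Type*} {γ : Type*} (p : γ → Prop) [DecidablePred p]
    (s : Finset β) (g : β → Multiset γ) :
    (∑ b ∈ s, g b).filter p = ∑ b ∈ s, (g b).filter p := by
  induction s using Finset.induction with
  | empty => simp
  | insert a s' hnm ih => rw [Finset.sum_insert hnm, Finset.sum_insert hnm,
      Multiset.filter_add, ih]

theorem sum_filter_card_le {β : Type*} {γ : Type*} (s : Finset β)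
    (q : β → γ → Prop) [∀ b, DecidablePred (q b)] (X : Multiset γ)
    (hdisj : ∀ a, ∀ b1 ∈ s, ∀ b2 ∈ s, q b1 a → q b2 a → b1 = b2) :
    ∑ b ∈ s, Multiset.card (X.filter (q b)) ≤ Multiset.card X := by
  induction X using Multiset.induction with
  | empty => simp
  | cons a X' ih =>
    have hstep : ∀ b ∈ s, Multiset.card ((a ::ₘ X').filter (q b)) =
        Multiset.card (X'.filter (q b)) + (if q b a then 1 else 0) := by
      intro b _
      rw [Multiset.filter_cons]
      split_ifs with h <;> simp
    rw [Finset.sum_congr rfl hstep, Finset.sum_add_distrib]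
    have h1 : (∑ b ∈ s, if q b a then 1 else 0) ≤ 1 := by
      rw [Finset.sum_boole]
      have : (s.filter (fun b => q b a)).card ≤ 1 := by
        refine Finset.card_le_one.mpr ?_
        intro b1 h1 b2 h2
        rw [Finset.mem_filter] at h1 h2
        exact hdisj a b1 h1.1 b2 h2.1 h1.2 h2.2
      exact_mod_cast this
    simp only [Multiset.card_cons]
    omega

variable [Fintype V]

theorem card_le_cross_add_span {α : Type*} [DecidableEq α]
    (E : Multiset (Sym2 V)) (f : V → α) :
    Multiset.card E ≤ Multiset.card (E.filter (fun e => ¬ (e.map f).IsDiag)) +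
      ∑ c ∈ Finset.univ.image f,
        spanCount E (Finset.univ.filter (fun v => f v = c)) := by
  have hsplit := Multiset.filter_add_not (fun e => (e.map f).IsDiag) E
  have hc : Multiset.card (E.filter (fun e => (e.map f).IsDiag)) +
      Multiset.card (E.filter (fun e => ¬ (e.map f).IsDiag)) = Multiset.card E := by
    rw [← Multiset.card_add, hsplit]
  have hle : E.filter (fun e => (e.map f).IsDiag) ≤
      ∑ c ∈ Finset.univ.image f,
        E.filter (fun e => e ∈ (Finset.univ.filter (fun v => f v = c)).sym2) := by
    rw [Multiset.le_iff_count]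
    intro a
    induction a with
    | _ u v =>
      rw [Multiset.count_filter]
      split_ifs with hd
      · have hd' : f u = f v := by
          rw [Sym2.map_pair_eq] at hd
          exact Sym2.mk_isDiag_iff.mp hd
        rw [Multiset.count_sum']
        have hmem : f u ∈ Finset.univ.image f := Finset.mem_image_of_mem f (Finset.mem_univ u)
        have hterm : Multiset.count s(u,v)
            (E.filter (fun e => e ∈ (Finset.univ.filter (fun w => f w = f u)).sym2)) =
            Multiset.count s(u,v) E := by
          rw [Multiset.count_filter, if_pos]
          exact mk_mem_sym2.mpr ⟨Finset.mem_filter.mpr ⟨Finset.mem_univ _, rfl⟩,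
            Finset.mem_filter.mpr ⟨Finset.mem_univ _, hd'.symm⟩⟩
        calc Multiset.count s(u,v) E
            = Multiset.count s(u,v)
              (E.filter (fun e => e ∈ (Finset.univ.filter (fun w => f w = f u)).sym2)) :=
              hterm.symm
          _ ≤ _ := Finset.single_le_sum
              (f := fun c => Multiset.count s(u,v)
                (E.filter (fun e => e ∈ (Finset.univ.filter (fun w => f w = c)).sym2)))
              (fun c _ => Nat.zero_le _) hmem
      · exact Nat.zero_le _
  have := Multiset.card_le_card hle
  rw [card_finset_sum] at this
  unfold spanCount
  omega

theorem sparse_cross {k l : ℤ} (E : Multiset (Sym2 V)) (hS : Sparse k l E)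
    (hcard : (Multiset.card E : ℤ) = k * (Fintype.card V) - l) (hl0 : 0 < l) (hlk : l ≤ k)
    {α : Type*} [DecidableEq α] (f : V → α) :
    l * (((Finset.univ.image f).card : ℤ) - 1) ≤
      (Multiset.card (E.filter (fun e => ¬ (e.map f).IsDiag)) : ℤ) := by
  set m := (Finset.univ.image f).card with hm
  have hsum : ∑ c ∈ Finset.univ.image f,
      ((Finset.univ.filter (fun v => f v = c)).card : ℤ) = (Fintype.card V : ℤ) := by
    have := Finset.card_eq_sum_card_image f (Finset.univ : Finset V)
    rw [Finset.card_univ] at this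
    exact_mod_cast this.symm
  have hspan : ∀ c ∈ Finset.univ.image f,
      (spanCount E (Finset.univ.filter (fun v => f v = c)) : ℤ) ≤
        k * ((Finset.univ.filter (fun v => f v = c)).card : ℤ) - l := by
    intro c hc
    have h1 := hS (Finset.univ.filter (fun v => f v = c))
    obtain ⟨w, -, hw⟩ := Finset.mem_image.mp hc
    have hne : (Finset.univ.filter (fun v => f v = c)).Nonempty :=
      ⟨w, Finset.mem_filter.mpr ⟨Finset.mem_univ _, hw⟩⟩
    have hcpos : 1 ≤ ((Finset.univ.filter (fun v => f v = c)).card : ℤ) := by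
      exact_mod_cast Finset.card_pos.mpr hne
    have hnonneg : (0 : ℤ) ≤ k * ((Finset.univ.filter (fun v => f v = c)).card : ℤ) - l := by
      nlinarith
    rw [max_eq_right hnonneg] at h1
    exact h1
  have hsum2 : ∑ c ∈ Finset.univ.image f,
      (spanCount E (Finset.univ.filter (fun v => f v = c)) : ℤ) ≤
        k * (Fintype.card V : ℤ) - l * m := by
    calc ∑ c ∈ Finset.univ.image f,
        (spanCount E (Finset.univ.filter (fun v => f v = c)) : ℤ)
        ≤ ∑ c ∈ Finset.univ.image f,
          (k * ((Finset.univ.filter (fun v => f v = c)).card : ℤ) - l) :=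
          Finset.sum_le_sum hspan
      _ = k * (Fintype.card V : ℤ) - l * m := by
          rw [Finset.sum_sub_distrib, ← Finset.mul_sum, hsum, Finset.sum_const, hm]
          push_cast
          ring
  have hmain := card_le_cross_add_span E f
  have hmain' : (Multiset.card E : ℤ) ≤
      (Multiset.card (E.filter (fun e => ¬ (e.map f).IsDiag)) : ℤ) +
      ∑ c ∈ Finset.univ.image f,
        (spanCount E (Finset.univ.filter (fun v => f v = c)) : ℤ) := by
    exact_mod_cast hmain
  linarith

end Counting

section Main

variable [Fintype V]

theorem exists_max (E : Multiset (Sym2 V)) (t : ℕ) :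
    ∃ F0 : Fin t → Multiset (Sym2 V), Good E F0 ∧
      ∀ G : Fin t → Multiset (Sym2 V), Good E G → total G ≤ total F0 := by
  set P : ℕ → Prop := fun n => ∃ G : Fin t → Multiset (Sym2 V), Good E G ∧ total G = n with hP
  have hbound : ∀ G : Fin t → Multiset (Sym2 V), Good E G → total G ≤ Multiset.card E := by
    intro G hG
    rw [total_eq_card_sum]
    exact Multiset.card_le_card hG.2
  have hP0 : P 0 := ⟨fun _ => 0, ⟨fun i e he => by simp at he, by simp⟩, by simp [total]⟩
  have hPN : P (Nat.findGreatest P (Multiset.card E)) :=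
    Nat.findGreatest_spec (Nat.zero_le _) hP0
  obtain ⟨F0, hGood, htot⟩ := hPN
  refine ⟨F0, hGood, fun G hG => ?_⟩
  rw [htot]
  exact Nat.le_findGreatest (hbound G hG) ⟨G, hG, rfl⟩

theorem packing (k l : ℤ) (hl0 : 0 < l) (hlk : l ≤ k) (hV : 1 ≤ Fintype.card V)
    (E : Multiset (Sym2 V)) (hT : Tight k l E) :
    ∃ T : Fin l.toNat → Multiset (Sym2 V), (∑ i, T i) ≤ E ∧
      ∀ i, Multiset.card (T i) + 1 = Fintype.card V ∧ IsForest (T i) ∧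
        (∀ S : Finset V, S.Nonempty → S ≠ Finset.univ →
          ∃ e ∈ T i, ∃ u v : V, e = s(u,v) ∧ u ∈ S ∧ v ∉ S) := by
  set t := l.toNat with htdef
  have hlt : (l : ℤ) = (t : ℤ) := (Int.toNat_of_nonneg hl0.le).symm
  set n := Fintype.card V with hn
  have hVne : Nonempty V := Fintype.card_pos_iff.mp hV
  obtain ⟨F0, h0, hmax⟩ := exists_max E t
  have hupper : ∀ i, Multiset.card (F0 i) + 1 ≤ n := by
    intro i
    refine forest_card_le (h0.1 i) Finset.univ Finset.univ_nonempty ?_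
    intro e _
    exact Finset.mem_sym2_iff.mpr (fun z _ => Finset.mem_univ z)
  -- lower bound on total
  have hlow : t * (n - 1) ≤ total F0 := by
    by_contra hlt'
    push_neg at hlt'
    -- classes
    set cl : V → Finset V := fun x => Finset.univ.filter (fun y => Ecl E F0 y x) with hcl
    have hclmem : ∀ {x y : V}, x ∈ cl y ↔ Ecl E F0 x y := by
      intro x y
      rw [hcl]
      simp only [Finset.mem_filter]
      exact ⟨fun h => h.2, fun h => ⟨Finset.mem_univ _, h⟩⟩
    have hcl_eq : ∀ {x y : V}, Ecl E F0 x y → cl x = cl y := by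
      intro x y h
      ext z
      rw [hclmem, hclmem]
      exact ⟨fun hz => hz.trans h, fun hz => hz.trans (Ecl.symm' h)⟩
    have hcl_rev : ∀ {x y : V}, cl x = cl y → Ecl E F0 x y := by
      intro x y h
      exact hclmem.mp (h ▸ hclmem.mpr Ecl.refl')
    set m := (Finset.univ.image cl).card with hm
    have hcond := sparse_cross E hT.1 hT.2 hl0 hlk cl
    -- per-forest counting
    have hkey : ∀ i : Fin t,
        n + Multiset.card ((F0 i).filter (fun e => ¬ (e.map cl).IsDiag)) ≤
          Multiset.card (F0 i) + m := by
      intro i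
      have hper : ∀ p ∈ Finset.univ.image cl,
          p.card ≤ Multiset.card ((F0 i).filter (fun e => e ∈ p.sym2)) + 1 := by
        intro p hp
        obtain ⟨z, -, rfl⟩ := Finset.mem_image.mp hp
        refine conn_card (fun e he => (Multiset.mem_filter.mp he).2) ?_
        intro x hx y hy
        have hxz : Ecl E F0 x z := hclmem.mp hx
        have hyz : Ecl E F0 y z := hclmem.mp hy
        have hxy : Ecl E F0 x y := hxz.trans (Ecl.symm' hyz)
        have hcw := ecl_connW hmax h0 hxy i
        refine Relation.ReflTransGen.mono ?_ _ _ hcw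
        rintro a b ⟨hmem, hax, hbx⟩
        exact Multiset.mem_filter.mpr ⟨hmem, mk_mem_sym2.mpr
          ⟨hclmem.mpr (hax.trans hxz), hclmem.mpr (hbx.trans hxz)⟩⟩
      have hsump : ∑ p ∈ Finset.univ.image cl, p.card = n := by
        have h1 := Finset.card_eq_sum_card_image cl (Finset.univ : Finset V)
        rw [Finset.card_univ] at h1
        have h2 : ∀ p ∈ Finset.univ.image cl,
            (Finset.univ.filter (fun a => cl a = p)).card = p.card := by
          intro p hp
          obtain ⟨z, -, rfl⟩ := Finset.mem_image.mp hp
          congr 1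
          ext a
          simp only [Finset.mem_filter, Finset.mem_univ, true_and]
          exact ⟨fun h => hclmem.mpr (hcl_rev h), fun h => hcl_eq (hclmem.mp h)⟩
        rw [Finset.sum_congr rfl h2] at h1
        exact h1.symm
      have hdisj : ∀ (a : Sym2 V), ∀ p1 ∈ Finset.univ.image cl, ∀ p2 ∈ Finset.univ.image cl,
          a ∈ p1.sym2 → a ∈ p2.sym2 → p1 = p2 := by
        intro a p1 hp1 p2 hp2 ha1 ha2
        induction a with
        | _ u v =>
          obtain ⟨z1, -, rfl⟩ := Finset.mem_image.mp hp1
          obtain ⟨z2, -, rfl⟩ := Finset.mem_image.mp hp2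
          have hu1 : u ∈ cl z1 := (mk_mem_sym2.mp ha1).1
          have hu2 : u ∈ cl z2 := (mk_mem_sym2.mp ha2).1
          exact (hcl_eq (hclmem.mp hu1)).symm.trans (hcl_eq (hclmem.mp hu2))
      have hsumle : ∑ p ∈ Finset.univ.image cl,
          Multiset.card ((F0 i).filter (fun e => e ∈ p.sym2)) ≤
            Multiset.card ((F0 i).filter (fun e => (e.map cl).IsDiag)) := by
        have hrw : ∀ p ∈ Finset.univ.image cl,
            (F0 i).filter (fun e => e ∈ p.sym2) =
              ((F0 i).filter (fun e => (e.map cl).IsDiag)).filter (fun e => e ∈ p.sym2) := by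
          intro p hp
          obtain ⟨z, -, rfl⟩ := Finset.mem_image.mp hp
          rw [Multiset.filter_filter]
          refine Multiset.filter_congr ?_
          intro e he
          constructor
          · intro hmem
            refine ⟨hmem, ?_⟩
            induction e with
            | _ u v =>
              obtain ⟨hu, hv⟩ := mk_mem_sym2.mp hmem
              have : Ecl E F0 u v := (hclmem.mp hu).trans (Ecl.symm' (hclmem.mp hv))
              rw [Sym2.map_pair_eq, Sym2.mk_isDiag_iff]
              exact hcl_eq this
          · exact fun h => h.1
        rw [Finset.sum_congr rfl (fun p hp => congrArg Multiset.card (hrw p hp))]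
        exact sum_filter_card_le _ _ _ (fun a p1 hp1 p2 hp2 hq1 hq2 =>
          hdisj a p1 hp1 p2 hp2 hq1 hq2)
      have hsplit : Multiset.card ((F0 i).filter (fun e => (e.map cl).IsDiag)) +
          Multiset.card ((F0 i).filter (fun e => ¬ (e.map cl).IsDiag)) =
            Multiset.card (F0 i) := by
        rw [← Multiset.card_add, Multiset.filter_add_not]
      have hnm : n ≤ (∑ p ∈ Finset.univ.image cl,
          Multiset.card ((F0 i).filter (fun e => e ∈ p.sym2))) + m := by
        rw [← hsump]
        calc ∑ p ∈ Finset.univ.image cl, p.card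
            ≤ ∑ p ∈ Finset.univ.image cl,
              (Multiset.card ((F0 i).filter (fun e => e ∈ p.sym2)) + 1) :=
              Finset.sum_le_sum hper
          _ = _ := by rw [Finset.sum_add_distrib, Finset.sum_const, smul_eq_mul, mul_one, hm]
      omega
    -- cross of E equals sum over forests
    have hfreeEcl : ∀ g ∈ E - ∑ i, F0 i, ∀ u v : V, g = s(u,v) → Ecl E F0 u v := by
      intro g hg u v hguv
      have hgfree : g ::ₘ ∑ i, F0 i ≤ E := by
        rw [Multiset.le_iff_count]
        intro a
        rw [Multiset.count_cons]
        have hcount : 0 < Multiset.count g (E - ∑ i, F0 i) := Multiset.count_pos.mpr hg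
        rw [Multiset.count_sub] at hcount
        by_cases hag : a = g
        · subst hag
          simp only [if_pos rfl]
          have h2 : Multiset.count a (∑ i, F0 i) < Multiset.count a E := by
            by_contra hle
            push_neg at hle
            rw [Nat.sub_eq_zero_of_le hle] at hcount
            exact lt_irrefl 0 hcount
          exact h2
        · simp only [if_neg hag, add_zero]
          exact Multiset.count_le_of_le a h0.2
      exact Relation.ReflTransGen.single ⟨F0, RS.base, hguv ▸ hgfree⟩
    have hcrossE : Multiset.card (E.filter (fun e => ¬ (e.map cl).IsDiag)) =
        ∑ i, Multiset.card ((F0 i).filter (fun e => ¬ (e.map cl).IsDiag)) := by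
      have hEeq : (∑ i, F0 i) + (E - ∑ i, F0 i) = E := by
        rw [add_comm]
        exact tsub_add_cancel_of_le h0.2
      have hrest : (E - ∑ i, F0 i).filter (fun e => ¬ (e.map cl).IsDiag) = 0 := by
        rw [Multiset.filter_eq_nil]
        intro g hg hcross
        induction g with
        | _ u v =>
          have := hfreeEcl _ hg u v rfl
          rw [Sym2.map_pair_eq, Sym2.mk_isDiag_iff] at hcross
          exact hcross (hcl_eq this)
      calc Multiset.card (E.filter (fun e => ¬ (e.map cl).IsDiag))
          = Multiset.card (((∑ i, F0 i) + (E - ∑ i, F0 i)).filter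
              (fun e => ¬ (e.map cl).IsDiag)) := by rw [hEeq]
        _ = Multiset.card ((∑ i, F0 i).filter (fun e => ¬ (e.map cl).IsDiag)) := by
            rw [Multiset.filter_add, hrest, add_zero]
        _ = _ := by
            rw [filter_finset_sum, card_finset_sum]
    have hsumkey : t * n + Multiset.card (E.filter (fun e => ¬ (e.map cl).IsDiag)) ≤
        total F0 + t * m := by
      have h1 := Finset.sum_le_sum (fun i (_ : i ∈ (Finset.univ : Finset (Fin t))) => hkey i)
      rw [Finset.sum_add_distrib, Finset.sum_add_distrib, Finset.sum_const, Finset.sum_const,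
        Finset.card_univ, Fintype.card_fin, smul_eq_mul, smul_eq_mul] at h1
      rw [hcrossE]
      unfold total
      omega
    have hmn : m ≤ n := by
      have := Finset.card_image_le (s := (Finset.univ : Finset V)) (f := cl)
      rwa [Finset.card_univ] at this
    have hm1 : 1 ≤ m := Finset.card_pos.mpr (Finset.univ_nonempty.image _)
    -- contradiction in ℤ
    have hcondZ : (t : ℤ) * ((m : ℤ) - 1) ≤
        (Multiset.card (E.filter (fun e => ¬ (e.map cl).IsDiag)) : ℤ) := by
      rw [← hlt]
      exact_mod_cast hcond
    have hsumkeyZ : (t : ℤ) * n +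
        (Multiset.card (E.filter (fun e => ¬ (e.map cl).IsDiag)) : ℤ) ≤
          (total F0 : ℤ) + (t : ℤ) * m := by exact_mod_cast hsumkey
    have htotZ : (total F0 : ℤ) < (t : ℤ) * ((n : ℤ) - 1) := by
      have h2 : ((n - 1 : ℕ) : ℤ) = (n : ℤ) - 1 := by
        rw [Nat.cast_sub hV]
        simp
      calc (total F0 : ℤ) < ((t * (n - 1) : ℕ) : ℤ) := by exact_mod_cast hlt'
        _ = (t : ℤ) * ((n : ℤ) - 1) := by push_cast [h2]; ring
    linarith
  -- each forest has exactly n - 1 edges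
  have hcards : ∀ i, Multiset.card (F0 i) + 1 = n := by
    intro i
    by_contra hne'
    have hlt2 : Multiset.card (F0 i) + 1 < n := lt_of_le_of_ne (hupper i) hne'
    have hstrict : total F0 < t * (n - 1) := by
      have h1 : ∑ j : Fin t, Multiset.card (F0 j) < ∑ _j : Fin t, (n - 1) := by
        refine Finset.sum_lt_sum (fun j _ => by have := hupper j; omega)
          ⟨i, Finset.mem_univ i, by omega⟩
      rw [Finset.sum_const, Finset.card_univ, Fintype.card_fin, smul_eq_mul] at h1
      exact h1
    omega
  refine ⟨F0, h0.2, fun i => ⟨hcards i, h0.1 i, ?_⟩⟩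
  intro S hSne hSuniv
  by_contra hno
  push_neg at hno
  have hclosed : ∀ e ∈ F0 i, ∀ a b, e = s(a,b) → (a ∈ S ↔ b ∈ S) := by
    intro e he a b hab
    exact ⟨fun ha => hno e he a b hab ha, fun hb => hno e he b a (hab.trans Sym2.eq_swap) hb⟩
  set X1 := (F0 i).filter (fun e => e ∈ S.sym2) with hX1
  set X2 := (F0 i).filter (fun e => ¬ e ∈ S.sym2) with hX2
  have hsplit : X1 + X2 = F0 i := Multiset.filter_add_not _ _
  have hSc_ne : (Finset.univ \ S).Nonempty := by
    rw [Finset.sdiff_nonempty]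
    intro hsub
    exact hSuniv (Finset.eq_univ_of_forall (fun x => hsub (Finset.mem_univ x)))
  have h1 : Multiset.card X1 + 1 ≤ S.card := by
    refine forest_card_le (isForest_of_le (Multiset.filter_le _ _) (h0.1 i)) S hSne ?_
    exact fun e he => (Multiset.mem_filter.mp he).2
  have h2 : Multiset.card X2 + 1 ≤ (Finset.univ \ S).card := by
    refine forest_card_le (isForest_of_le (Multiset.filter_le _ _) (h0.1 i))
      (Finset.univ \ S) hSc_ne ?_
    intro e he
    have he' := Multiset.mem_filter.mp he
    induction e with
    | _ a b =>
      have haS : a ∉ S := by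
        intro ha
        exact he'.2 (mk_mem_sym2.mpr ⟨ha, (hclosed _ he'.1 a b rfl).mp ha⟩)
      have hbS : b ∉ S := fun hb => haS ((hclosed _ he'.1 a b rfl).mpr hb)
      exact mk_mem_sym2.mpr ⟨Finset.mem_sdiff.mpr ⟨Finset.mem_univ _, haS⟩,
        Finset.mem_sdiff.mpr ⟨Finset.mem_univ _, hbS⟩⟩
  have hScard : (Finset.univ \ S).card = n - S.card := Finset.card_univ_diff S
  have hSle : S.card ≤ n := by
    have := Finset.card_le_card (Finset.subset_univ S)
    rwa [Finset.card_univ] at this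
  have hcc : Multiset.card X1 + Multiset.card X2 = Multiset.card (F0 i) := by
    rw [← Multiset.card_add, hsplit]
  have := hcards i
  omega

end Main

end NW17

/-- For `0 < ℓ ≤ k`, a `(k,ℓ)`-tight multigraph on `n ≥ 1` vertices contains `ℓ`
edge-disjoint spanning trees: `ℓ` pairwise disjoint sub-multisets of `E`, each consisting
of `n - 1` loopless edges and connected (every nonempty proper vertex subset is left by
one of its edges). -/
theorem stmt17 (k l : ℤ) (hl0 : 0 < l) (hlk : l ≤ k)
    {V : Type*} [Fintype V] [DecidableEq V] (hV : 1 ≤ Fintype.card V)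
    (E : Multiset (Sym2 V)) (hT : Tight k l E) :
    ∃ T : Fin l.toNat → Multiset (Sym2 V),
      (∑ i, T i) ≤ E ∧
      ∀ i : Fin l.toNat,
        Multiset.card (T i) = Fintype.card V - 1 ∧
        (∀ e ∈ T i, ¬ e.IsDiag) ∧
        (∀ S : Finset V, S.Nonempty → S ≠ Finset.univ →
          ∃ e ∈ T i, ∃ u v : V, e = s(u, v) ∧ u ∈ S ∧ v ∉ S) := by
  obtain ⟨T, hle, hprops⟩ := NW17.packing k l hl0 hlk hV E hT
  refine ⟨T, hle, fun i => ?_⟩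
  obtain ⟨hcard, hfor, hcut⟩ := hprops i
  exact ⟨by omega, fun e he => hfor.not_isDiag he, hcut⟩
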